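/- For all positive integers k and m, there exists a positive integer n such that for every coloring of the vertex set {0,1}ⁿ ⊂ ℝⁿ of the n-dimensional unit hypercube with an arbitrary set of colors, there exists either a monochromatic isometric copy of {0, √(2^k)}^k (the vertex set of a k-dimensional hypercube of sidelength √(2^k)) inside {0,1}ⁿ, or a rainbow isometric copy of {0, √(2^k)}^m (the vertex set of an m-dimensional hypercube of sidelength √(2^k)) inside {0,1}ⁿ. -/

import Mathlib

open Finset

/-- Relative Ramsey property: inside any finite ground set of size `≥ R` and any coloring of
`Finset ℕ` by `κ`, there is an `N`-element subset on which all `a`-element subsets get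
the same color. -/
def RamMem (κ : Type) (a N R : ℕ) : Prop :=
  ∀ S₀ : Finset ℕ, R ≤ S₀.card → ∀ c : Finset ℕ → κ,
    ∃ S : Finset ℕ, S ⊆ S₀ ∧ S.card = N ∧
      ∀ A, A ⊆ S → A.card = a → ∀ B, B ⊆ S → B.card = a → c A = c B

/-- Chain property used in the induction step of Ramsey's theorem. -/
def ChainP (κ : Type) (a M RC : ℕ) : Prop :=
  ∀ S₀ : Finset ℕ, RC ≤ S₀.card → ∀ c : Finset ℕ → κ,
    ∃ (f : Fin M → ℕ) (γ : Fin M → κ), StrictMono f ∧ (∀ i, f i ∈ S₀) ∧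
      ∀ (i : Fin M) (B : Finset ℕ),
        (∀ b ∈ B, ∃ j, i < j ∧ f j = b) → B.card = a → c (insert (f i) B) = γ i

lemma chain_exists (κ : Type) (a : ℕ) (IH : ∀ N, ∃ R, RamMem κ a N R) :
    ∀ M, ∃ RC, ChainP κ a M RC := by
  intro M
  induction M with
  | zero =>
    refine ⟨0, fun S₀ _ c => ⟨Fin.elim0, Fin.elim0, fun i => i.elim0, fun i => i.elim0,
      fun i => i.elim0⟩⟩
  | succ M ih =>
    obtain ⟨RC, hRC⟩ := ih
    obtain ⟨RB, hRB⟩ := IH (max RC a)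
    refine ⟨RB + 1, ?_⟩
    intro S₀ hcard c
    have hne : S₀.Nonempty := card_pos.mp (by omega)
    set a₀ := S₀.min' hne with ha₀
    have ha₀mem : a₀ ∈ S₀ := S₀.min'_mem hne
    have hS₁ : RB ≤ (S₀.erase a₀).card := by
      rw [card_erase_of_mem ha₀mem]; omega
    obtain ⟨T, hTsub, hTcard, hThom⟩ := hRB (S₀.erase a₀) hS₁ (fun B => c (insert a₀ B))
    obtain ⟨f, γ, hmono, hmem, hprop⟩ := hRC T (by omega) c
    obtain ⟨Bstar, hBsub, hBcard⟩ := Finset.exists_subset_card_eq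
      (show a ≤ T.card by omega)
    -- prepend a₀
    have hfS₀ : ∀ i', f i' ∈ S₀ := fun i' => mem_of_mem_erase (hTsub (hmem i'))
    have ha₀lt : ∀ i', a₀ < f i' := by
      intro i'
      have h1 : f i' ∈ S₀.erase a₀ := hTsub (hmem i')
      exact lt_of_le_of_ne (S₀.min'_le _ (mem_of_mem_erase h1)) (Ne.symm (ne_of_mem_erase h1))
    refine ⟨Fin.cons a₀ f, Fin.cons (c (insert a₀ Bstar)) γ, ?_, ?_, ?_⟩
    · intro i j
      refine Fin.cases ?_ (fun j' => ?_) j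
      · intro hij; exact absurd hij (by simp)
      · refine Fin.cases ?_ (fun i' => ?_) i <;> intro hij
        · simpa using ha₀lt j'
        · simp only [Fin.cons_succ]
          exact hmono (Fin.succ_lt_succ_iff.mp hij)
    · intro i
      refine Fin.cases ?_ (fun i' => ?_) i
      · simpa using ha₀mem
      · simpa using hfS₀ i'
    · intro i
      refine Fin.cases ?_ (fun i' => ?_) i <;> intro B hB hBc
      · -- i = 0 : all of B comes from f, hence lies in T
        have hBT : B ⊆ T := by
          intro b hb
          obtain ⟨j, hj, hfj⟩ := hB b hb
          rcases Fin.eq_zero_or_eq_succ j with rfl | ⟨j', rfl⟩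
          · exact absurd hj (lt_irrefl _)
          · rw [Fin.cons_succ] at hfj; exact hfj ▸ hmem j'
        simp only [Fin.cons_zero]
        exact hThom B hBT hBc Bstar hBsub hBcard
      · -- i = succ i'
        simp only [Fin.cons_succ]
        refine hprop i' B ?_ hBc
        intro b hb
        obtain ⟨j, hj, hfj⟩ := hB b hb
        rcases Fin.eq_zero_or_eq_succ j with rfl | ⟨j', rfl⟩
        · exact absurd hj (by simp)
        · rw [Fin.cons_succ] at hfj
          exact ⟨j', Fin.succ_lt_succ_iff.mp hj, hfj⟩

/-- Finite hypergraph Ramsey theorem, relative form. -/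
theorem ramsey_exists (κ : Type) [Fintype κ] [DecidableEq κ] (a : ℕ) :
    ∀ N, ∃ R, RamMem κ a N R := by
  induction a with
  | zero =>
    intro N
    refine ⟨N, fun S₀ h c => ?_⟩
    obtain ⟨S, hsub, hcard⟩ := Finset.exists_subset_card_eq h
    refine ⟨S, hsub, hcard, ?_⟩
    intro A _ hA B _ hB
    rw [Finset.card_eq_zero.mp hA, Finset.card_eq_zero.mp hB]
  | succ a IH =>
    intro N
    rcases isEmpty_or_nonempty κ with hk | hk
    · exact ⟨0, fun S₀ h c => (hk.false (c ∅)).elim⟩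
    obtain ⟨RC, hRC⟩ := chain_exists κ a IH (Fintype.card κ * N + 1)
    refine ⟨RC, ?_⟩
    intro S₀ hcard c
    obtain ⟨f, γ, hmono, hmem, hprop⟩ := hRC S₀ hcard c
    -- pigeonhole on γ
    obtain ⟨g, -, hg⟩ := Finset.exists_lt_card_fiber_of_mul_lt_card_of_maps_to
      (s := (univ : Finset (Fin (Fintype.card κ * N + 1)))) (f := γ) (t := (univ : Finset κ))
      (n := N) (fun x _ => mem_univ _)
      (by simp only [Finset.card_univ, Fintype.card_fin]; omega)
    obtain ⟨J, hJsub, hJcard⟩ := Finset.exists_subset_card_eq (show N ≤ _ from hg.le)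
    refine ⟨J.image f, ?_, ?_, ?_⟩
    · intro x hx; obtain ⟨i, _, rfl⟩ := Finset.mem_image.mp hx; exact hmem i
    · rw [Finset.card_image_of_injective _ hmono.injective, hJcard]
    · -- homogeneity
      have key : ∀ A, A ⊆ J.image f → A.card = a + 1 → c A = g := by
        intro A hA hAc
        obtain ⟨JA, hJAsub, hJAim⟩ := Finset.subset_image_iff.mp hA
        have hJAcard : JA.card = a + 1 := by
          rw [← hAc, ← hJAim, Finset.card_image_of_injective _ hmono.injective]
        have hJAne : JA.Nonempty := card_pos.mp (by omega)
        set i₀ := JA.min' hJAne with hi₀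
        have hi₀mem : i₀ ∈ JA := JA.min'_mem hJAne
        have hfi₀A : f i₀ ∈ A := by rw [← hJAim]; exact mem_image_of_mem f hi₀mem
        have hins : insert (f i₀) (A.erase (f i₀)) = A := insert_erase hfi₀A
        have hlater : ∀ b ∈ A.erase (f i₀), ∃ j, i₀ < j ∧ f j = b := by
          intro b hb
          have hbA : b ∈ A := mem_of_mem_erase hb
          rw [← hJAim] at hbA
          obtain ⟨j, hjJA, rfl⟩ := Finset.mem_image.mp hbA
          have : j ≠ i₀ := by
            rintro rfl; exact (ne_of_mem_erase hb) rfl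
          exact ⟨j, lt_of_le_of_ne (JA.min'_le _ hjJA) (Ne.symm this), rfl⟩
        have hcerase : (A.erase (f i₀)).card = a := by
          rw [card_erase_of_mem hfi₀A, hAc]; omega
        have := hprop i₀ (A.erase (f i₀)) hlater hcerase
        rw [hins] at this
        rw [this]
        exact (Finset.mem_filter.mp (hJsub (hJAsub hi₀mem))).2
      intro A hA hAc B hB hBc
      rw [key A hA hAc, key B hB hBc]

open Finset

/-- Indicator point of a union of blocks of size `2^(k-1)`. -/
def xPoint (k R : ℕ) (A : Finset ℕ) : EuclideanSpace ℝ (Fin (2^(k-1)*R)) :=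
  WithLp.toLp 2 (fun j : Fin (2^(k-1)*R) => if j.1 / 2^(k-1) ∈ A then 1 else 0)

lemma xPoint_mem_cube (k R : ℕ) (A : Finset ℕ) :
    ∀ i, xPoint k R A i = 0 ∨ xPoint k R A i = 1 := by
  intro i
  by_cases h : i.1 / 2^(k-1) ∈ A <;> simp [xPoint, h]

lemma sum_blocks {M : Type*} [AddCommMonoid M] (h R : ℕ) (hh : 0 < h) (f : ℕ → M) :
    ∑ i ∈ Finset.range (h*R), f (i/h) = ∑ r ∈ Finset.range R, h • f r := by
  induction R with
  | zero => simp
  | succ R ih =>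
    have hsplit : h * (R+1) = h*R + h := by ring
    rw [hsplit, Finset.range_eq_Ico,
      ← Finset.sum_Ico_consecutive _ (Nat.zero_le (h*R)) (Nat.le_add_right _ _)]
    have hconst : ∀ j ∈ Finset.Ico (h*R) (h*R+h), f (j / h) = f R := by
      intro j hj
      simp only [Finset.mem_Ico] at hj
      have h1 : R * h ≤ j := by rw [mul_comm]; omega
      have h2 : j < (R+1) * h := by
        have : (R+1)*h = h*R + h := by ring
        omega
      rw [Nat.div_eq_of_lt_le h1 h2]
    rw [Finset.sum_congr rfl hconst, Finset.sum_const, Nat.card_Ico, ← Finset.range_eq_Ico, ih,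
      Finset.sum_range_succ]
    congr 2
    omega

lemma dist_xPoint (k R : ℕ) (A B : Finset ℕ) :
    dist (xPoint k R A) (xPoint k R B)
      = Real.sqrt ((2^(k-1) : ℝ) *
          ((Finset.range R).filter (fun r => ¬((r ∈ A) ↔ (r ∈ B)))).card) := by
  have hh : 0 < 2^(k-1) := Nat.pow_pos (by norm_num)
  set F : ℕ → ℝ := fun r => if ¬((r ∈ A) ↔ (r ∈ B)) then (1:ℝ) else 0 with hF
  rw [EuclideanSpace.dist_eq]
  congr 1
  have hpt : ∀ i : Fin (2^(k-1)*R),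
      dist (xPoint k R A i) (xPoint k R B i)^2 = F (i.1/2^(k-1)) := by
    intro i
    by_cases hA : i.1/2^(k-1) ∈ A <;> by_cases hB : i.1/2^(k-1) ∈ B <;>
      simp [xPoint, hA, hB, Real.dist_eq, hF] <;> norm_num
  calc ∑ i : Fin (2^(k-1)*R), dist (xPoint k R A i) (xPoint k R B i)^2
      = ∑ i : Fin (2^(k-1)*R), F (i.1/2^(k-1)) := Finset.sum_congr rfl (fun i _ => hpt i)
    _ = ∑ i ∈ Finset.range (2^(k-1)*R), F (i/2^(k-1)) :=
        Fin.sum_univ_eq_sum_range (fun i => F (i/2^(k-1))) _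
    _ = ∑ r ∈ Finset.range R, (2^(k-1)) • F r := sum_blocks (2^(k-1)) R hh F
    _ = (2^(k-1) : ℝ) * ∑ r ∈ Finset.range R, F r := by
        rw [← Finset.smul_sum, nsmul_eq_mul]
        push_cast
        ring
    _ = (2^(k-1) : ℝ) * ((Finset.range R).filter (fun r => ¬((r ∈ A) ↔ (r ∈ B)))).card := by
        rw [Finset.sum_boole]

open Classical in
lemma dist_cube_vertices (j : ℕ) (s : ℝ) (y y' : EuclideanSpace ℝ (Fin j))
    (hy : ∀ i, y i = 0 ∨ y i = s) (hy' : ∀ i, y' i = 0 ∨ y' i = s) :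
    dist y y' = Real.sqrt (s^2 * (Finset.univ.filter fun i => y i ≠ y' i).card) := by
  rw [EuclideanSpace.dist_eq]
  congr 1
  have hpt : ∀ i, dist (y i) (y' i)^2 = if y i ≠ y' i then s^2 else 0 := by
    intro i
    by_cases hyy : y i = y' i
    · rw [if_neg (by simpa using hyy), hyy, dist_self]
      ring
    · rw [if_pos hyy, Real.dist_eq]
      rcases hy i with h1 | h1 <;> rcases hy' i with h2 | h2 <;> rw [h1, h2]
      · exact absurd (h1 ▸ h2 ▸ rfl : y i = y' i) hyy
      · rw [zero_sub, abs_neg, sq_abs]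
      · rw [sub_zero, sq_abs]
      · exact absurd (h1 ▸ h2 ▸ rfl : y i = y' i) hyy
  rw [Finset.sum_congr rfl (fun i _ => hpt i), Finset.sum_ite, Finset.sum_const_zero,
    Finset.sum_const, add_zero, nsmul_eq_mul]
  ring

/-- Cardinality of the blockwise symmetric difference of two grid sets. -/
lemma card_grid_diff (d R : ℕ) (g : Fin d → ℕ → ℕ)
    (hginj : ∀ i v i' v', v ≤ 9 → v' ≤ 9 → g i v = g i' v' → i = i' ∧ v = v')
    (hgR : ∀ i v, g i v < R)
    (ℓ μ : Fin d → ℕ) (hℓ : ∀ i, ℓ i ≤ 9) (hμ : ∀ i, μ i ≤ 9) :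
    ((Finset.range R).filter (fun r => ¬((r ∈ Finset.image (fun i => g i (ℓ i)) Finset.univ) ↔
        (r ∈ Finset.image (fun i => g i (μ i)) Finset.univ)))).card
      = 2 * (Finset.univ.filter fun i => ℓ i ≠ μ i).card := by
  classical
  have hset : ((Finset.range R).filter (fun r =>
      ¬((r ∈ Finset.image (fun i => g i (ℓ i)) Finset.univ) ↔
        (r ∈ Finset.image (fun i => g i (μ i)) Finset.univ))))
      = (Finset.univ.filter fun i => ℓ i ≠ μ i).biUnion
          (fun i => {g i (ℓ i), g i (μ i)}) := by
    ext r
    simp only [Finset.mem_filter, Finset.mem_range, Finset.mem_biUnion, Finset.mem_image,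
      Finset.mem_univ, true_and, Finset.mem_insert, Finset.mem_singleton]
    constructor
    · rintro ⟨-, hne⟩
      by_cases hA : ∃ i, g i (ℓ i) = r
      · obtain ⟨i, hi⟩ := hA
        have hℓμ : ℓ i ≠ μ i := by
          rintro heq
          exact hne ⟨fun _ => ⟨i, heq ▸ hi⟩, fun _ => ⟨i, hi⟩⟩
        exact ⟨i, hℓμ, Or.inl hi.symm⟩
      · have hB : ∃ i, g i (μ i) = r := by
          by_contra hB
          exact hne (iff_of_false hA hB)
        obtain ⟨i, hi⟩ := hB
        have hℓμ : ℓ i ≠ μ i := by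
          rintro heq
          exact hA ⟨i, heq ▸ hi⟩
        exact ⟨i, hℓμ, Or.inr hi.symm⟩
    · rintro ⟨i, hℓμ, hr | hr⟩
      · refine ⟨hr ▸ hgR i (ℓ i), ?_⟩
        rintro ⟨hmp, -⟩
        obtain ⟨i', hi'⟩ := hmp ⟨i, hr.symm⟩
        obtain ⟨rfl, heq⟩ := hginj i' (μ i') i (ℓ i) (hμ i') (hℓ i) (hi'.trans hr)
        exact hℓμ heq.symm
      · refine ⟨hr ▸ hgR i (μ i), ?_⟩
        rintro ⟨-, hmpr⟩
        obtain ⟨i', hi'⟩ := hmpr ⟨i, hr.symm⟩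
        obtain ⟨rfl, heq⟩ := hginj i' (ℓ i') i (μ i) (hℓ i') (hμ i) (hi'.trans hr)
        exact hℓμ heq
  rw [hset, Finset.card_biUnion]
  · rw [Finset.sum_congr rfl (fun i hi => ?_), Finset.sum_const, smul_eq_mul, mul_comm]
    have hii : ℓ i ≠ μ i := (Finset.mem_filter.mp hi).2
    rw [Finset.card_insert_of_notMem, Finset.card_singleton]
    simp only [Finset.mem_singleton]
    intro heq
    exact hii (hginj i (ℓ i) i (μ i) (hℓ i) (hμ i) heq).2
  · intro i _ i' _ hii'
    simp only [Finset.disjoint_left, Finset.mem_insert, Finset.mem_singleton]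
    rintro r (hr | hr) (hr' | hr') <;>
      · subst hr
        exact hii' ((hginj _ _ _ _ (by first | exact hℓ _ | exact hμ _)
          (by first | exact hℓ _ | exact hμ _) hr'.symm).1).symm

/-- Difference set of indicator grid maps. -/
lemma filter_lof_ne (j d : ℕ) (σ : Fin j → Fin d) (hσ : Function.Injective σ)
    (T T' : Finset (Fin j)) :
    (Finset.univ.filter fun i : Fin d =>
        (if ∃ s ∈ T, σ s = i then 1 else 0 : ℕ) ≠ (if ∃ s ∈ T', σ s = i then 1 else 0 : ℕ))
      = (Finset.univ.filter fun s : Fin j => ¬((s ∈ T) ↔ (s ∈ T'))).image σ := by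
  classical
  ext i
  simp only [Finset.mem_filter, Finset.mem_univ, true_and, Finset.mem_image]
  constructor
  · intro hne
    by_cases hT : ∃ s ∈ T, σ s = i
    · obtain ⟨s, hsT, hsi⟩ := hT
      refine ⟨s, ?_, hsi⟩
      rintro ⟨h1, -⟩
      have : ∃ s ∈ T', σ s = i := ⟨s, h1 hsT, hsi⟩
      rw [if_pos ⟨s, hsT, hsi⟩, if_pos this] at hne
      exact hne rfl
    · by_cases hT' : ∃ s ∈ T', σ s = i
      · obtain ⟨s, hsT, hsi⟩ := hT'
        refine ⟨s, ?_, hsi⟩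
        rintro ⟨-, h2⟩
        exact hT ⟨s, h2 hsT, hsi⟩
      · rw [if_neg hT, if_neg hT'] at hne
        exact absurd rfl hne
  · rintro ⟨s, hs, rfl⟩
    have hs' : ¬((s ∈ T) ↔ (s ∈ T')) := hs
    have h1 : (∃ s' ∈ T, σ s' = σ s) ↔ s ∈ T :=
      ⟨fun ⟨s', h, he⟩ => hσ he ▸ h, fun h => ⟨s, h, rfl⟩⟩
    have h2 : (∃ s' ∈ T', σ s' = σ s) ↔ s ∈ T' :=
      ⟨fun ⟨s', h, he⟩ => hσ he ▸ h, fun h => ⟨s, h, rfl⟩⟩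
    by_cases hT : s ∈ T <;> by_cases hT' : s ∈ T' <;>
      simp [h1, h2, hT, hT'] at hs' ⊢


/-- The vertex set `{0, s}^m ⊂ ℝ^m` of an `m`-dimensional hypercube of sidelength `s`. -/
def cubeVertices (m : ℕ) (s : ℝ) : Set (EuclideanSpace ℝ (Fin m)) :=
  {x | ∀ i, x i = 0 ∨ x i = s}

/-- An injective map defined on `A` into the set `X` preserving Euclidean distances;
its image is an isometric copy of `A` inside `X`. -/
def IsIsomCopyInto {m n : ℕ} (A : Set (EuclideanSpace ℝ (Fin m)))
    (X : Set (EuclideanSpace ℝ (Fin n)))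
    (f : EuclideanSpace ℝ (Fin m) → EuclideanSpace ℝ (Fin n)) : Prop :=
  Set.InjOn f A ∧ (∀ x ∈ A, f x ∈ X) ∧
    ∀ x ∈ A, ∀ y ∈ A, dist (f x) (f y) = dist x y

set_option maxHeartbeats 2000000 in
/-- For all positive `k, m` there exists `n` such that every coloring of the vertex set
`{0,1}ⁿ` of the unit hypercube contains either a monochromatic isometric copy of
`{0, √(2^k)}^k` or a rainbow isometric copy of `{0, √(2^k)}^m`. -/
theorem cube_in_cube_mono_or_rainbow (k m : ℕ) (hk : 0 < k) (hm : 0 < m) :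
    ∃ n : ℕ, 0 < n ∧
      ∀ (α : Type*) (χ : EuclideanSpace ℝ (Fin n) → α),
        (∃ f : EuclideanSpace ℝ (Fin k) → EuclideanSpace ℝ (Fin n),
          IsIsomCopyInto (cubeVertices k (Real.sqrt (2 ^ k))) (cubeVertices n 1) f ∧
          ∀ x ∈ cubeVertices k (Real.sqrt (2 ^ k)),
            ∀ y ∈ cubeVertices k (Real.sqrt (2 ^ k)), χ (f x) = χ (f y)) ∨
        (∃ f : EuclideanSpace ℝ (Fin m) → EuclideanSpace ℝ (Fin n),
          IsIsomCopyInto (cubeVertices m (Real.sqrt (2 ^ k))) (cubeVertices n 1) f ∧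
          ∀ x ∈ cubeVertices m (Real.sqrt (2 ^ k)),
            ∀ y ∈ cubeVertices m (Real.sqrt (2 ^ k)), χ (f x) = χ (f y) → x = y) := by
  classical
  set d := k + m with hd
  have hd0 : 0 < d := by omega
  obtain ⟨R₀, hR₀⟩ := ramsey_exists (Finset (Finset (Fin (2*d)) × Finset (Fin (2*d)))) (2*d) (10*d)
  set R := max R₀ 1 with hR
  refine ⟨2^(k-1)*R, by positivity, ?_⟩
  intro α χ
  -- pattern coloring
  set P : Finset ℕ → Finset (Finset (Fin (2*d)) × Finset (Fin (2*d))) := fun X =>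
    if hX : X.card = 2*d then
      Finset.univ.filter (fun pq =>
        χ (xPoint k R (Finset.image (⇑(X.orderEmbOfFin hX)) pq.1))
          = χ (xPoint k R (Finset.image (⇑(X.orderEmbOfFin hX)) pq.2)))
    else ∅ with hP
  obtain ⟨S, hSsub, hScard, hhom⟩ := hR₀ (Finset.range R)
    (by rw [Finset.card_range]; omega) P
  -- basic indexing
  set e : Fin (10*d) ↪o ℕ := S.orderEmbOfFin hScard with he
  set eF : ℕ → ℕ → ℕ := fun p v => e ⟨10*(p % d) + min v 9, by
    have h1 : p % d < d := Nat.mod_lt _ hd0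
    have h2 : min v 9 ≤ 9 := min_le_right _ _
    omega⟩ with heF
  have eF_mem : ∀ p v, eF p v ∈ S := fun p v => Finset.orderEmbOfFin_mem S hScard _
  have eF_ltR : ∀ p v, eF p v < R := by
    intro p v
    have := hSsub (eF_mem p v)
    simpa using this
  have eF_mono : ∀ p v p' v', p' < d → v ≤ 9 → v' ≤ 9 →
      (p < p' ∨ (p = p' ∧ v < v')) → eF p v < eF p' v' := by
    intro p v p' v' hp' hv hv' hor
    have hp : p < d := by omega
    simp only [heF]
    apply e.strictMono
    rw [Fin.mk_lt_mk]
    have h1 : p % d = p := Nat.mod_eq_of_lt hp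
    have h2 : p' % d = p' := Nat.mod_eq_of_lt hp'
    omega
  have eF_inj : ∀ p v p' v', p < d → p' < d → v ≤ 9 → v' ≤ 9 →
      eF p v = eF p' v' → p = p' ∧ v = v' := by
    intro p v p' v' hp hp' hv hv' heq
    simp only [heF] at heq
    have := e.injective heq
    rw [Fin.mk.injEq] at this
    have h1 : p % d = p := Nat.mod_eq_of_lt hp
    have h2 : p' % d = p' := Nat.mod_eq_of_lt hp'
    omega
  set g : Fin d → ℕ → ℕ := fun i v => eF i.1 v with hg
  have hginj : ∀ (i : Fin d) v i' v', v ≤ 9 → v' ≤ 9 → g i v = g i' v' → i = i' ∧ v = v' := by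
    intro i v i' v' hv hv' hgg
    obtain ⟨h1, h2⟩ := eF_inj i.1 v i'.1 v' i.2 i'.2 hv hv' hgg
    exact ⟨Fin.ext h1, h2⟩
  have hgR : ∀ (i : Fin d) v, g i v < R := fun i v => eF_ltR i.1 v
  -- grid points and colors
  set pt : (Fin d → ℕ) → EuclideanSpace ℝ (Fin (2^(k-1)*R)) := fun ℓ =>
    xPoint k R (Finset.image (fun i => g i (ℓ i)) Finset.univ) with hpt
  set ctil : (Fin d → ℕ) → α := fun ℓ => χ (pt ℓ) with hctil
  -- the 2d-element window associated to a pair of grid points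
  set fdx : Fin (2*d) → Fin d := fun j => ⟨j.1/2, by have := j.2; omega⟩ with hfdx
  set qdx : Fin d → ℕ → Fin (2*d) := fun i b => ⟨2*i.1 + min b 1, by
    have h1 : min b 1 ≤ 1 := min_le_right _ _
    have h2 := i.2
    omega⟩ with hqdx
  set mkF : (Fin d → ℕ) → (Fin d → ℕ) → Fin (2*d) → ℕ := fun ℓ ℓ' j =>
    eF (j.1/2) (if j.1 % 2 = 0 then min (ℓ (fdx j)) (ℓ' (fdx j))
      else (if ℓ (fdx j) = ℓ' (fdx j) then 9
        else max (ℓ (fdx j)) (ℓ' (fdx j)))) with hmkF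
  set mkX : (Fin d → ℕ) → (Fin d → ℕ) → Finset ℕ := fun ℓ ℓ' =>
    Finset.image (mkF ℓ ℓ') Finset.univ with hmkX
  set mkq : (Fin d → ℕ) → (Fin d → ℕ) → Finset (Fin (2*d)) := fun ℓ ℓ' =>
    Finset.image (fun i : Fin d => qdx i (if ℓ' i < ℓ i then 1 else 0)) Finset.univ with hmkq
  have hmkFsymm : ∀ ℓ ℓ', mkF ℓ ℓ' = mkF ℓ' ℓ := by
    intro ℓ ℓ'
    funext j
    simp only [hmkF]
    congr 1
    split_ifs <;> omega
  have hmkFmono : ∀ ℓ ℓ', (∀ i, ℓ i ≤ 8) → (∀ i, ℓ' i ≤ 8) → StrictMono (mkF ℓ ℓ') := by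
    intro ℓ ℓ' hb hb' j j' hjj
    simp only [hmkF]
    have hj2 := j.2
    have hj2' := j'.2
    have hjlt : j.1 < j'.1 := hjj
    have hbj1 := hb (fdx j); have hbj2 := hb' (fdx j)
    have hbj1' := hb (fdx j'); have hbj2' := hb' (fdx j')
    apply eF_mono
    · omega
    · split_ifs <;> omega
    · split_ifs <;> omega
    · by_cases hdd : j.1/2 < j'.1/2
      · exact Or.inl hdd
      · right
        have hdeq : j.1/2 = j'.1/2 := by omega
        have hmod : j.1 % 2 = 0 ∧ j'.1 % 2 = 1 := by omega
        have hfd : fdx j = fdx j' := by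
          simp only [hfdx]
          exact Fin.ext hdeq
        rw [hfd] at hbj1 hbj2 ⊢
        refine ⟨hdeq, ?_⟩
        rw [if_pos hmod.1, if_neg (by omega)]
        split_ifs <;> omega
  have hmkXcard : ∀ ℓ ℓ', (∀ i, ℓ i ≤ 8) → (∀ i, ℓ' i ≤ 8) → (mkX ℓ ℓ').card = 2*d := by
    intro ℓ ℓ' hb hb'
    simp only [hmkX]
    rw [Finset.card_image_of_injective _ (hmkFmono ℓ ℓ' hb hb').injective, Finset.card_univ,
      Fintype.card_fin]
  have hcomp0 : ∀ (ℓ ℓ' : Fin d → ℕ) (i : Fin d),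
      mkF ℓ ℓ' (qdx i 0) = eF i.1 (min (ℓ i) (ℓ' i)) := by
    intro ℓ ℓ' i
    have hfd : fdx (qdx i 0) = i := by
      simp only [hfdx, hqdx]
      exact Fin.ext (by simp)
    have hval : (qdx i 0).1 = 2*i.1 := by simp [hqdx]
    simp only [hmkF, hfd, hval]
    rw [if_pos (by omega)]
    congr 1
    omega
  have hcomp1 : ∀ (ℓ ℓ' : Fin d → ℕ) (i : Fin d),
      mkF ℓ ℓ' (qdx i 1) = eF i.1 (if ℓ i = ℓ' i then 9 else max (ℓ i) (ℓ' i)) := by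
    intro ℓ ℓ' i
    have hfd : fdx (qdx i 1) = i := by
      simp only [hfdx, hqdx]
      exact Fin.ext (by simp; omega)
    have hval : (qdx i 1).1 = 2*i.1 + 1 := by simp [hqdx]
    simp only [hmkF, hfd, hval]
    rw [if_neg (by omega)]
    congr 1
    omega
  have hXsub : ∀ ℓ ℓ', mkX ℓ ℓ' ⊆ S := by
    intro ℓ ℓ' x hx
    simp only [hmkX, Finset.mem_image] at hx
    obtain ⟨j, -, rfl⟩ := hx
    simp only [hmkF]
    exact eF_mem _ _
  have hQ : ∀ ℓ ℓ' (hb : ∀ i, ℓ i ≤ 8) (hb' : ∀ i, ℓ' i ≤ 8),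
      Finset.image (mkF ℓ ℓ') (mkq ℓ ℓ') = Finset.image (fun i => g i (ℓ i)) Finset.univ := by
    intro ℓ ℓ' hb hb'
    simp only [hmkq]
    rw [Finset.image_image]
    refine Finset.image_congr fun i _ => ?_
    simp only [Function.comp_apply]
    rcases lt_trichotomy (ℓ i) (ℓ' i) with h | h | h
    · rw [if_neg (by omega), hcomp0]
      simp only [hg]
      congr 1
      omega
    · rw [if_neg (by omega), hcomp0]
      simp only [hg]
      congr 1
      omega
    · rw [if_pos h, hcomp1]
      simp only [hg]
      rw [if_neg (by omega)]
      congr 1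
      omega
  have hP_iff : ∀ ℓ ℓ' (hb : ∀ i, ℓ i ≤ 8) (hb' : ∀ i, ℓ' i ≤ 8),
      (ctil ℓ = ctil ℓ' ↔ (mkq ℓ ℓ', mkq ℓ' ℓ) ∈ P (mkX ℓ ℓ')) := by
    intro ℓ ℓ' hb hb'
    have hcard := hmkXcard ℓ ℓ' hb hb'
    have hemb : mkF ℓ ℓ' = ⇑((mkX ℓ ℓ').orderEmbOfFin hcard) :=
      Finset.orderEmbOfFin_unique hcard
        (fun j => by simp only [hmkX]; exact Finset.mem_image_of_mem _ (Finset.mem_univ j))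
        (hmkFmono ℓ ℓ' hb hb')
    have hQ' : Finset.image (mkF ℓ ℓ') (mkq ℓ' ℓ)
        = Finset.image (fun i => g i (ℓ' i)) Finset.univ := by
      rw [hmkFsymm ℓ ℓ']
      exact hQ ℓ' ℓ hb' hb
    simp only [hP]
    rw [dif_pos hcard, Finset.mem_filter]
    simp only [Finset.mem_univ, true_and]
    rw [← hemb, hQ ℓ ℓ' hb hb', hQ']
  have KEY : ∀ ℓ ℓ' μ μ' : Fin d → ℕ, (∀ i, ℓ i ≤ 8) → (∀ i, ℓ' i ≤ 8) →
      (∀ i, μ i ≤ 8) → (∀ i, μ' i ≤ 8) →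
      (∀ i, (ℓ i < ℓ' i ↔ μ i < μ' i) ∧ (ℓ' i < ℓ i ↔ μ' i < μ i)) →
      (ctil ℓ = ctil ℓ' ↔ ctil μ = ctil μ') := by
    intro ℓ ℓ' μ μ' hbℓ hbℓ' hbμ hbμ' hcmp
    have hqcongr : ∀ (a b a' b' : Fin d → ℕ), (∀ i, b i < a i ↔ b' i < a' i) →
        mkq a b = mkq a' b' := by
      intro a b a' b' hiff
      simp only [hmkq]
      congr 1
      funext i
      rw [if_congr (hiff i) rfl rfl]
    have hq1 : mkq ℓ ℓ' = mkq μ μ' := hqcongr _ _ _ _ (fun i => (hcmp i).2)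
    have hq2 : mkq ℓ' ℓ = mkq μ' μ := hqcongr _ _ _ _ (fun i => (hcmp i).1)
    have hPX : P (mkX ℓ ℓ') = P (mkX μ μ') :=
      hhom _ (hXsub ℓ ℓ') (hmkXcard ℓ ℓ' hbℓ hbℓ') _ (hXsub μ μ') (hmkXcard μ μ' hbμ hbμ')
    rw [hP_iff ℓ ℓ' hbℓ hbℓ', hP_iff μ μ' hbμ hbμ', hq1, hq2, hPX]
  -- preserved coordinates
  set Pres : Fin d → Prop := fun i => ∀ ℓ ℓ' : Fin d → ℕ, (∀ j, j ≠ i → ℓ j = ℓ' j) →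
    (∀ j, ℓ j ≤ 8) → (∀ j, ℓ' j ≤ 8) → ctil ℓ = ctil ℓ' with hPres
  have P1 : ∀ i : Fin d, (∃ ℓ ℓ' : Fin d → ℕ, (∀ j, ℓ j ≤ 8) ∧ (∀ j, ℓ' j ≤ 8) ∧
      (∀ j, j ≠ i → ℓ j = ℓ' j) ∧ ℓ i < ℓ' i ∧ ctil ℓ = ctil ℓ') → Pres i := by
    rintro i ⟨ℓ, ℓ', hb, hb', hoff, hlt, hcol⟩
    intro μ μ' hoff' hbμ hbμ'
    rcases lt_trichotomy (μ i) (μ' i) with h | h | h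
    · refine (KEY ℓ ℓ' μ μ' hb hb' hbμ hbμ' (fun j => ?_)).mp hcol
      by_cases hj : j = i
      · subst hj
        exact ⟨iff_of_true hlt h, iff_of_false (by omega) (by omega)⟩
      · have h1 := hoff j hj
        have h2 := hoff' j hj
        exact ⟨iff_of_false (by omega) (by omega), iff_of_false (by omega) (by omega)⟩
    · have : μ = μ' := by
        funext j
        by_cases hj : j = i
        · subst hj; exact h
        · exact hoff' j hj
      rw [this]
    · refine ((KEY ℓ ℓ' μ' μ hb hb' hbμ' hbμ (fun j => ?_)).mp hcol).symm
      by_cases hj : j = i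
      · subst hj
        exact ⟨iff_of_true hlt h, iff_of_false (by omega) (by omega)⟩
      · have h1 := hoff j hj
        have h2 := hoff' j hj
        exact ⟨iff_of_false (by omega) (by omega), iff_of_false (by omega) (by omega)⟩
  have P2 : ∀ ℓ ℓ' : Fin d → ℕ, (∀ j, ℓ j ≤ 8) → (∀ j, ℓ' j ≤ 8) → ctil ℓ = ctil ℓ' →
      ∀ i, ℓ i ≠ ℓ' i → Pres i := by
    intro ℓ ℓ' hb hb' hcol i hne
    set z : Fin d → ℕ := fun _ => 4 with hz
    set w : Fin d → ℕ := fun j => if ℓ j < ℓ' j then 7 else if ℓ' j < ℓ j then 1 else 4 with hw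
    set z' : Fin d → ℕ := fun j => if j = i then 5 else 4 with hz'
    have hbz : ∀ j, z j ≤ 8 := fun j => by simp [hz]
    have hbw : ∀ j, w j ≤ 8 := fun j => by simp only [hw]; split_ifs <;> omega
    have hbz' : ∀ j, z' j ≤ 8 := fun j => by simp only [hz']; split_ifs <;> omega
    have e1 : ctil z = ctil w := by
      refine (KEY ℓ ℓ' z w hb hb' hbz hbw (fun j => ?_)).mp hcol
      simp only [hz, hw]
      split_ifs <;> omega
    have e2 : ctil z' = ctil w := by
      refine (KEY ℓ ℓ' z' w hb hb' hbz' hbw (fun j => ?_)).mp hcol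
      simp only [hz', hw]
      by_cases hj : j = i
      · subst hj
        rw [if_pos rfl]
        split_ifs <;> omega
      · rw [if_neg hj]
        split_ifs <;> omega
    refine P1 i ⟨z, z', hbz, hbz', fun j hj => ?_, ?_, e1.trans e2.symm⟩
    · simp only [hz, hz']
      rw [if_neg hj]
    · simp [hz, hz']
  -- indicator grid maps and support sets
  set lofT : (j : ℕ) → (Fin j → Fin d) → Finset (Fin j) → Fin d → ℕ :=
    fun j σ T i => if ∃ s ∈ T, σ s = i then 1 else 0 with hlofT
  set Tset : (j : ℕ) → EuclideanSpace ℝ (Fin j) → Finset (Fin j) :=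
    fun j y => Finset.univ.filter (fun s => y s ≠ 0) with hTset
  -- the common isometric-copy construction
  have ASM : ∀ (j : ℕ) (σ : Fin j → Fin d), Function.Injective σ →
      IsIsomCopyInto (cubeVertices j (Real.sqrt (2^k))) (cubeVertices (2^(k-1)*R) 1)
        (fun y => pt (lofT j σ (Tset j y))) := by
    intro j σ hσinj
    have hsq : Real.sqrt ((2:ℝ)^k) ^ 2 = (2:ℝ)^k := Real.sq_sqrt (by positivity)
    have hsne : Real.sqrt ((2:ℝ)^k) ≠ 0 := by positivity
    have hb9 : ∀ T (i : Fin d), lofT j σ T i ≤ 9 := by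
      intro T i
      simp only [hlofT]
      split_ifs <;> omega
    have hpow : (2:ℝ)^(k-1) * 2 = 2^k := by
      rw [← pow_succ]
      congr 1
      omega
    have hdist : ∀ x ∈ cubeVertices j (Real.sqrt (2^k)), ∀ y ∈ cubeVertices j (Real.sqrt (2^k)),
        dist (pt (lofT j σ (Tset j x))) (pt (lofT j σ (Tset j y))) = dist x y := by
      intro x hx y hy
      have hx' : ∀ i, x i = 0 ∨ x i = Real.sqrt (2^k) := hx
      have hy' : ∀ i, y i = 0 ∨ y i = Real.sqrt (2^k) := hy
      have hcc : (Finset.univ.filter fun s => ¬((s ∈ Tset j x) ↔ (s ∈ Tset j y)))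
          = (Finset.univ.filter fun s => x s ≠ y s) := by
        refine Finset.filter_congr fun s _ => ?_
        simp only [hTset, Finset.mem_filter, Finset.mem_univ, true_and]
        rcases hx' s with h1 | h1 <;> rcases hy' s with h2 | h2 <;> rw [h1, h2] <;>
          simp [hsne, hsne.symm, Ne.symm hsne]
      simp only [hpt]
      rw [dist_xPoint k R, dist_cube_vertices j (Real.sqrt (2^k)) x y hx' hy']
      rw [card_grid_diff d R g hginj hgR (lofT j σ (Tset j x)) (lofT j σ (Tset j y))
        (hb9 _) (hb9 _)]
      simp only [hlofT]
      rw [filter_lof_ne j d σ hσinj (Tset j x) (Tset j y),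
        Finset.card_image_of_injective _ hσinj, hcc, hsq]
      congr 1
      push_cast
      rw [← hpow]
      ring
    refine ⟨?_, ?_, hdist⟩
    · intro x hx y hy hf
      replace hf : pt (lofT j σ (Tset j x)) = pt (lofT j σ (Tset j y)) := hf
      have h0 : dist x y = 0 := by
        rw [← hdist x hx y hy, hf, dist_self]
      exact dist_eq_zero.mp h0
    · intro x _
      exact fun i => xPoint_mem_cube k R _ i
  -- dichotomy
  by_cases hcase : k ≤ (Finset.univ.filter (fun i => Pres i)).card
  · -- MONO
    left
    obtain ⟨K, hKsub, hKcard⟩ := Finset.exists_subset_card_eq hcase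
    set σ : Fin k → Fin d := ⇑(K.orderEmbOfFin hKcard) with hσ
    have hσinj : Function.Injective σ := (K.orderEmbOfFin hKcard).injective
    have hσPres : ∀ s, Pres (σ s) := by
      intro s
      have : σ s ∈ K := Finset.orderEmbOfFin_mem K hKcard s
      exact (Finset.mem_filter.mp (hKsub this)).2
    refine ⟨_, ASM k σ hσinj, ?_⟩
    have hboff : ∀ (T : Finset (Fin k)) (j : Fin d), lofT k σ T j ≤ 8 := by
      intro T j
      simp only [hlofT]
      split_ifs <;> omega
    have chain : ∀ T : Finset (Fin k),
        ctil (lofT k σ T) = ctil (lofT k σ ∅) := by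
      intro T
      induction T using Finset.induction_on with
      | empty => rfl
      | @insert s T hsT ih =>
        refine Eq.trans ?_ ih
        refine hσPres s (lofT k σ (insert s T)) (lofT k σ T) ?_ (hboff _) (hboff _)
        intro j hj
        simp only [hlofT]
        refine if_congr ?_ rfl rfl
        constructor
        · rintro ⟨s', hs', he⟩
          rcases Finset.mem_insert.mp hs' with rfl | hs'T
          · exact absurd he hj.symm
          · exact ⟨s', hs'T, he⟩
        · rintro ⟨s', hs', he⟩
          exact ⟨s', Finset.mem_insert_of_mem hs', he⟩
    intro x hx y hy
    exact (chain (Tset k x)).trans (chain (Tset k y)).symm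
  · -- RAINBOW
    right
    have hcompl : m ≤ (Finset.univ.filter (fun i => ¬ Pres i)).card := by
      have hsum := Finset.card_filter_add_card_filter_not
        (s := (Finset.univ : Finset (Fin d))) (p := fun i => Pres i)
      rw [Finset.card_univ, Fintype.card_fin] at hsum
      omega
    obtain ⟨K, hKsub, hKcard⟩ := Finset.exists_subset_card_eq hcompl
    set σ : Fin m → Fin d := ⇑(K.orderEmbOfFin hKcard) with hσ
    have hσinj : Function.Injective σ := (K.orderEmbOfFin hKcard).injective
    have hσPres : ∀ s, ¬ Pres (σ s) := by
      intro s
      have : σ s ∈ K := Finset.orderEmbOfFin_mem K hKcard s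
      exact (Finset.mem_filter.mp (hKsub this)).2
    refine ⟨_, ASM m σ hσinj, ?_⟩
    intro x hx y hy hχ
    replace hχ : ctil (lofT m σ (Tset m x)) = ctil (lofT m σ (Tset m y)) := hχ
    have hbT : ∀ (T : Finset (Fin m)) (i : Fin d), lofT m σ T i ≤ 8 := by
      intro T i
      simp only [hlofT]
      split_ifs <;> omega
    have hsne : Real.sqrt ((2:ℝ)^k) ≠ 0 := by positivity
    have hx' : ∀ i, x i = 0 ∨ x i = Real.sqrt (2^k) := hx
    have hy' : ∀ i, y i = 0 ∨ y i = Real.sqrt (2^k) := hy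
    have hTeq : Tset m x = Tset m y := by
      ext s
      by_contra hsne2
      have hdiff : lofT m σ (Tset m x) (σ s) ≠ lofT m σ (Tset m y) (σ s) := by
        simp only [hlofT]
        have h1 : (∃ s' ∈ Tset m x, σ s' = σ s) ↔ s ∈ Tset m x :=
          ⟨fun ⟨s', h, he⟩ => hσinj he ▸ h, fun h => ⟨s, h, rfl⟩⟩
        have h2 : (∃ s' ∈ Tset m y, σ s' = σ s) ↔ s ∈ Tset m y :=
          ⟨fun ⟨s', h, he⟩ => hσinj he ▸ h, fun h => ⟨s, h, rfl⟩⟩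
        by_cases ha : s ∈ Tset m x <;> by_cases hb : s ∈ Tset m y
        · exact absurd (iff_of_true ha hb) hsne2
        · rw [if_pos (h1.mpr ha), if_neg (fun hc => hb (h2.mp hc))]
          omega
        · rw [if_neg (fun hc => ha (h1.mp hc)), if_pos (h2.mpr hb)]
          omega
        · exact absurd (iff_of_false ha hb) hsne2
      exact hσPres s (P2 _ _ (hbT _) (hbT _) hχ (σ s) hdiff)
    have hmem : ∀ s, (s ∈ Tset m x) ↔ (s ∈ Tset m y) := fun s => by rw [hTeq]
    ext s
    rcases hx' s with h1 | h1 <;> rcases hy' s with h2 | h2 <;> rw [h1, h2]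
    · have hmx : s ∉ Tset m x := by simp [hTset, h1]
      have hmy : s ∈ Tset m y := by simp [hTset, h2, hsne]
      exact absurd ((hmem s).mpr hmy) hmx
    · have hmx : s ∈ Tset m x := by simp [hTset, h1, hsne]
      have hmy : s ∉ Tset m y := by simp [hTset, h2]
      exact absurd ((hmem s).mp hmx) hmy
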